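/- For every k ≥ 1, the commutator [a, c^{-2^k}] = a⁻¹·c^{2^k}·a·c^{-2^k} fixes every word of length 4, its section at every vertex v ∈ {0,1}⁴ with v ≠ 0111 is the identity, and its section at the vertex 0111 equals [a, c^{-2^{k-1}}]. -/

import Mathlib

namespace BVTree

/-- States of the automaton (generators, their inverses, and the identity). -/
inductive Q : Type
  | e | qa | qb | qc | qd | qa' | qb' | qc' | qd'
  deriving DecidableEq

open Q

/-- Output function of the automaton. -/
def Qout : Q → Bool → Bool
  | qa, x => !x
  | qa', x => !x
  | _, x => x

/-- Transition function of the automaton. -/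
def Qtrans : Q → Bool → Q
  | qa, false => qd
  | qa, true => e
  | qb, false => qa
  | qb, true => qc
  | qc, _ => qa
  | qd, false => e
  | qd, true => qb
  | qa', false => e
  | qa', true => qd'
  | qb', false => qa'
  | qb', true => qc'
  | qc', _ => qa'
  | qd', false => e
  | qd', true => qb'
  | e, _ => e

/-- The state corresponding to the inverse automorphism. -/
def Qinv : Q → Q
  | e => e
  | qa => qa' | qb => qb' | qc => qc' | qd => qd'
  | qa' => qa | qb' => qb | qc' => qc | qd' => qd

/-- The action of a state on finite binary words. -/
def act : Q → List Bool → List Bool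
  | _, [] => []
  | q, x :: w => Qout q x :: act (Qtrans q x) w

lemma act_inv (q : Q) : ∀ w, act (Qinv q) (act q w) = w := by
  intro w
  induction w generalizing q with
  | nil => rfl
  | cons x w ih =>
    have h1 : Qout (Qinv q) (Qout q x) = x := by cases q <;> cases x <;> rfl
    have h2 : Qtrans (Qinv q) (Qout q x) = Qinv (Qtrans q x) := by
      cases q <;> cases x <;> rfl
    simp [act, h1, h2, ih]

/-- The tree automorphism determined by a state of the automaton. -/
def aut (q : Q) : Equiv.Perm (List Bool) where
  toFun := act q
  invFun := act (Qinv q)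
  left_inv := act_inv q
  right_inv := by
    intro w
    have h : Qinv (Qinv q) = q := by cases q <;> rfl
    simpa [h] using act_inv (Qinv q) w

/-- The automorphism `a`: `a(0w) = 1·d(w)`, `a(1w) = 0·w`. -/
def a : Equiv.Perm (List Bool) := aut qa
/-- The automorphism `b`: `b(0w) = 0·a(w)`, `b(1w) = 1·c(w)`. -/
def b : Equiv.Perm (List Bool) := aut qb
/-- The automorphism `c`: `c(0w) = 0·a(w)`, `c(1w) = 1·a(w)`. -/
def c : Equiv.Perm (List Bool) := aut qc
/-- The automorphism `d`: `d(0w) = 0·w`, `d(1w) = 1·b(w)`. -/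
def d : Equiv.Perm (List Bool) := aut qd

/-- The group `G` generated by `a`, `b`, `c`, `d`. -/
def G : Subgroup (Equiv.Perm (List Bool)) := Subgroup.closure {a, b, c, d}


section Aux

theorem Equiv.Perm.apply_inv_self {α : Type*} (f : Equiv.Perm α) (x : α) : f (f⁻¹ x) = x :=
  f.apply_symm_apply x

theorem Equiv.Perm.inv_apply_self {α : Type*} (f : Equiv.Perm α) (x : α) : f⁻¹ (f x) = x :=
  f.symm_apply_apply x

lemma inv_cons {f g : Equiv.Perm (List Bool)} {x y : Bool}
    (h : ∀ w, f (x :: w) = y :: g w) (w : List Bool) :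
    f⁻¹ (y :: w) = x :: g⁻¹ w := by
  have h2 : f (x :: g⁻¹ w) = y :: w := by rw [h, Equiv.Perm.apply_inv_self]
  rw [← h2, Equiv.Perm.inv_apply_self]

lemma inv_cons' {f : Equiv.Perm (List Bool)} {x y : Bool}
    (h : ∀ w, f (x :: w) = y :: w) (w : List Bool) :
    f⁻¹ (y :: w) = x :: w := by
  rw [← h w, Equiv.Perm.inv_apply_self]

lemma act_e : ∀ w : List Bool, act Q.e w = w := by
  intro w
  induction w with
  | nil => rfl
  | cons x w ih => simp [act, Qout, Qtrans, ih]

lemma a_f (w : List Bool) : a (false :: w) = true :: d w := rfl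
lemma a_t (w : List Bool) : a (true :: w) = false :: w := by
  have h : a (true :: w) = false :: act Q.e w := rfl
  rw [h, act_e]
lemma ai_t (w : List Bool) : a⁻¹ (true :: w) = false :: d⁻¹ w := inv_cons a_f w
lemma ai_f (w : List Bool) : a⁻¹ (false :: w) = true :: w := inv_cons' a_t w
lemma b_f (w : List Bool) : b (false :: w) = false :: a w := rfl
lemma b_t (w : List Bool) : b (true :: w) = true :: c w := rfl
lemma bi_f (w : List Bool) : b⁻¹ (false :: w) = false :: a⁻¹ w := inv_cons b_f w
lemma bi_t (w : List Bool) : b⁻¹ (true :: w) = true :: c⁻¹ w := inv_cons b_t w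
lemma c_x (x : Bool) (w : List Bool) : c (x :: w) = x :: a w := by cases x <;> rfl
lemma ci_x (x : Bool) (w : List Bool) : c⁻¹ (x :: w) = x :: a⁻¹ w := inv_cons (c_x x) w
lemma d_f (w : List Bool) : d (false :: w) = false :: w := by
  have h : d (false :: w) = false :: act Q.e w := rfl
  rw [h, act_e]
lemma d_t (w : List Bool) : d (true :: w) = true :: b w := rfl
lemma di_f (w : List Bool) : d⁻¹ (false :: w) = false :: w := inv_cons' d_f w
lemma di_t (w : List Bool) : d⁻¹ (true :: w) = true :: b⁻¹ w := inv_cons d_t w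

lemma cpow (n : ℕ) (x : Bool) : ∀ w, (c ^ n) (x :: w) = x :: (a ^ n) w := by
  induction n with
  | zero => intro w; simp
  | succ n ih =>
    intro w
    rw [pow_succ, pow_succ, Equiv.Perm.mul_apply, Equiv.Perm.mul_apply, c_x, ih]

lemma a2 (x : Bool) (w : List Bool) : (a ^ 2) (x :: w) = x :: d w := by
  rw [pow_two, Equiv.Perm.mul_apply]
  cases x
  · rw [a_f, a_t]
  · rw [a_t, a_f]

lemma a2pow (m : ℕ) (x : Bool) : ∀ w, (a ^ (2 * m)) (x :: w) = x :: (d ^ m) w := by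
  induction m with
  | zero => intro w; simp
  | succ m ih =>
    intro w
    have h2 : 2 * (m + 1) = 2 * m + 2 := by ring
    rw [h2, pow_add, Equiv.Perm.mul_apply, a2, ih, pow_succ, Equiv.Perm.mul_apply]

lemma dpow_f (m : ℕ) : ∀ w, (d ^ m) (false :: w) = false :: w := by
  induction m with
  | zero => intro w; simp
  | succ m ih =>
    intro w
    rw [pow_succ, Equiv.Perm.mul_apply, d_f, ih]

lemma dpow_t (m : ℕ) : ∀ w, (d ^ m) (true :: w) = true :: (b ^ m) w := by
  induction m with
  | zero => intro w; simp
  | succ m ih =>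
    intro w
    rw [pow_succ, pow_succ, Equiv.Perm.mul_apply, Equiv.Perm.mul_apply, d_t, ih]

lemma bpow_f (m : ℕ) : ∀ w, (b ^ m) (false :: w) = false :: (a ^ m) w := by
  induction m with
  | zero => intro w; simp
  | succ m ih =>
    intro w
    rw [pow_succ, pow_succ, Equiv.Perm.mul_apply, Equiv.Perm.mul_apply, b_f, ih]

lemma bpow_t (m : ℕ) : ∀ w, (b ^ m) (true :: w) = true :: (c ^ m) w := by
  induction m with
  | zero => intro w; simp
  | succ m ih =>
    intro w
    rw [pow_succ, pow_succ, Equiv.Perm.mul_apply, Equiv.Perm.mul_apply, b_t, ih]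

lemma cipow (n : ℕ) (x : Bool) (w : List Bool) :
    (c ^ n)⁻¹ (x :: w) = x :: (a ^ n)⁻¹ w := inv_cons (cpow n x) w

lemma a2ipow (m : ℕ) (x : Bool) (w : List Bool) :
    (a ^ (2 * m))⁻¹ (x :: w) = x :: (d ^ m)⁻¹ w := inv_cons (a2pow m x) w

lemma dipow_f (m : ℕ) (w : List Bool) :
    (d ^ m)⁻¹ (false :: w) = false :: w := inv_cons' (dpow_f m) w

lemma dipow_t (m : ℕ) (w : List Bool) :
    (d ^ m)⁻¹ (true :: w) = true :: (b ^ m)⁻¹ w := inv_cons (dpow_t m) w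

lemma bipow_f (m : ℕ) (w : List Bool) :
    (b ^ m)⁻¹ (false :: w) = false :: (a ^ m)⁻¹ w := inv_cons (bpow_f m) w

lemma bipow_t (m : ℕ) (w : List Bool) :
    (b ^ m)⁻¹ (true :: w) = true :: (c ^ m)⁻¹ w := inv_cons (bpow_t m) w

lemma apow_comm (m : ℕ) (w : List Bool) : (a ^ m) (a w) = a ((a ^ m) w) := by
  rw [← Equiv.Perm.mul_apply, ← Equiv.Perm.mul_apply, ← pow_succ, ← pow_succ']

lemma pow_nil {f : Equiv.Perm (List Bool)} (h : f [] = []) (n : ℕ) : (f ^ n) [] = [] := by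
  induction n with
  | zero => simp
  | succ n ih => rw [pow_succ, Equiv.Perm.mul_apply, h, ih]

lemma inv_nil {f : Equiv.Perm (List Bool)} (h : f [] = []) : f⁻¹ [] = [] := by
  have h2 := congrArg (fun u => f⁻¹ u) h
  rw [Equiv.Perm.inv_apply_self] at h2
  exact h2.symm

lemma a_nil : a [] = [] := rfl
lemma b_nil : b [] = [] := rfl
lemma c_nil : c [] = [] := rfl
lemma d_nil : d [] = [] := rfl
lemma ai_nil : a⁻¹ [] = [] := inv_nil a_nil
lemma bi_nil : b⁻¹ [] = [] := inv_nil b_nil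
lemma ci_nil : c⁻¹ [] = [] := inv_nil c_nil
lemma di_nil : d⁻¹ [] = [] := inv_nil d_nil
lemma apow_nil (n : ℕ) : (a ^ n) [] = [] := pow_nil a_nil n
lemma bpow_nil (n : ℕ) : (b ^ n) [] = [] := pow_nil b_nil n
lemma cpow_nil (n : ℕ) : (c ^ n) [] = [] := pow_nil c_nil n
lemma dpow_nil (n : ℕ) : (d ^ n) [] = [] := pow_nil d_nil n
lemma aipow_nil (n : ℕ) : (a ^ n)⁻¹ [] = [] := inv_nil (apow_nil n)
lemma bipow_nil (n : ℕ) : (b ^ n)⁻¹ [] = [] := inv_nil (bpow_nil n)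
lemma cipow_nil (n : ℕ) : (c ^ n)⁻¹ [] = [] := inv_nil (cpow_nil n)
lemma dipow_nil (n : ℕ) : (d ^ n)⁻¹ [] = [] := inv_nil (dpow_nil n)

lemma len4 {α : Type*} {v : List α} (h : v.length = 4) :
    ∃ a b c d, v = [a, b, c, d] := by
  rcases v with _ | ⟨a, _ | ⟨b, _ | ⟨c, _ | ⟨d, _ | ⟨e, t⟩⟩⟩⟩⟩ <;> simp at h
  exact ⟨a, b, c, d, rfl⟩

end Aux

/-- for `k ≥ 1`, the commutator `[a, c^{-2^k}]` fixes level `4`, has trivial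
sections at all level-4 vertices other than `0111`, and its section at `0111` is
`[a, c^{-2^{k-1}}]`. -/
theorem commutator_section_recursion (k : ℕ) (hk : 1 ≤ k) :
    (∀ v : List Bool, v.length = 4 →
      (a⁻¹ * c ^ (2 ^ k) * a * (c ^ (2 ^ k))⁻¹) v = v) ∧
    (∀ v : List Bool, v.length = 4 → v ≠ [false, true, true, true] →
      ∀ w : List Bool, (a⁻¹ * c ^ (2 ^ k) * a * (c ^ (2 ^ k))⁻¹) (v ++ w) = v ++ w) ∧
    (∀ w : List Bool,
      (a⁻¹ * c ^ (2 ^ k) * a * (c ^ (2 ^ k))⁻¹) ([false, true, true, true] ++ w)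
        = [false, true, true, true] ++
            (a⁻¹ * c ^ (2 ^ (k - 1)) * a * (c ^ (2 ^ (k - 1)))⁻¹) w) := by
  obtain ⟨j, rfl⟩ : ∃ j, k = j + 1 := ⟨k - 1, (Nat.succ_pred_eq_of_pos hk).symm⟩
  have hn : (2 : ℕ) ^ (j + 1) = 2 * 2 ^ j := by rw [pow_succ, mul_comm]
  simp only [hn, Nat.add_sub_cancel]
  refine ⟨?_, ?_, ?_⟩
  · intro v hv
    obtain ⟨x0, x1, x2, x3, rfl⟩ := len4 hv
    cases x0 <;> cases x1 <;> cases x2 <;> cases x3 <;>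
      simp [Equiv.Perm.mul_apply, a_f, a_t, ai_f, ai_t, b_f, b_t, bi_f, bi_t,
        c_x, ci_x, d_f, d_t, di_f, di_t, cpow, cipow, a2pow, a2ipow,
        dpow_f, dpow_t, dipow_f, dipow_t, bpow_f, bpow_t, bipow_f, bipow_t,
        apow_comm, Equiv.Perm.apply_inv_self, Equiv.Perm.inv_apply_self,
        a_nil, b_nil, c_nil, d_nil, ai_nil, bi_nil, ci_nil, di_nil,
        apow_nil, bpow_nil, cpow_nil, dpow_nil,
        aipow_nil, bipow_nil, cipow_nil, dipow_nil]
  · intro v hv hne w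
    obtain ⟨x0, x1, x2, x3, rfl⟩ := len4 hv
    cases x0 <;> cases x1 <;> cases x2 <;> cases x3 <;>
      first
      | exact absurd rfl hne
      | simp [Equiv.Perm.mul_apply, a_f, a_t, ai_f, ai_t, b_f, b_t, bi_f, bi_t,
          c_x, ci_x, d_f, d_t, di_f, di_t, cpow, cipow, a2pow, a2ipow,
          dpow_f, dpow_t, dipow_f, dipow_t, bpow_f, bpow_t, bipow_f, bipow_t,
          apow_comm, Equiv.Perm.apply_inv_self, Equiv.Perm.inv_apply_self]
  · intro w
    simp [Equiv.Perm.mul_apply, a_f, a_t, ai_f, ai_t, b_f, b_t, bi_f, bi_t,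
      c_x, ci_x, d_f, d_t, di_f, di_t, cpow, cipow, a2pow, a2ipow,
      dpow_f, dpow_t, dipow_f, dipow_t, bpow_f, bpow_t, bipow_f, bipow_t]

end BVTree
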